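/- Let d > 0, α ∈ [0, 1], and suppose there exist constants C, c > 0 such that k_μ(t) ≥ C·exp(−c·t^{d/(d+2)}·(ln t)^α) for all t ≥ 2, and suppose μ([1 − ε₀, 1]) < 1 for some ε₀ ∈ (0, 1]. Then μ([1 − ε, 1]) > 0 for all sufficiently small ε > 0, and liminf_{ε → 0⁺} ln(−ln(μ([1 − ε, 1])))/ln ε ≥ −d/2. -/

import Mathlib

open MeasureTheory

noncomputable section

lemma aux_int_bound (μ : Measure ℝ) [IsProbabilityMeasure μ]
    (hsupp : μ (Set.Icc (-1 : ℝ) 1)ᶜ = 0) (t ε : ℝ) (ht : 0 ≤ t) :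
    (∫ l, Real.exp (-t * (1 - l)) ∂μ)
      ≤ (μ (Set.Icc (1 - ε) 1)).toReal + Real.exp (-t * ε) := by
  have hae : ∀ᵐ l ∂μ, l ∈ Set.Icc (-1 : ℝ) 1 := MeasureTheory.ae_iff.mpr hsupp
  have hfm : AEStronglyMeasurable (fun l => Real.exp (-t * (1 - l))) μ :=
    (Real.continuous_exp.comp (by continuity)).aestronglyMeasurable
  have hfi : Integrable (fun l => Real.exp (-t * (1 - l))) μ := by
    refine Integrable.mono' (integrable_const (1 : ℝ)) hfm ?_
    filter_upwards [hae] with l hl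
    rw [Real.norm_eq_abs, abs_of_pos (Real.exp_pos _)]
    rw [Real.exp_le_one_iff]
    have h1 : 0 ≤ t * (1 - l) := mul_nonneg ht (by linarith [hl.2])
    linarith
  have hgi : Integrable (fun l => (Set.Icc (1 - ε) 1).indicator (fun _ => (1:ℝ)) l
      + Real.exp (-t * ε)) μ :=
    ((integrable_const (1:ℝ)).indicator measurableSet_Icc).add (integrable_const _)
  have hle : ∀ᵐ l ∂μ, Real.exp (-t * (1 - l))
      ≤ (Set.Icc (1 - ε) 1).indicator (fun _ => (1:ℝ)) l + Real.exp (-t * ε) := by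
    filter_upwards [hae] with l hl
    by_cases hmem : l ∈ Set.Icc (1 - ε) 1
    · rw [Set.indicator_of_mem hmem]
      have h1 : Real.exp (-t * (1 - l)) ≤ 1 := by
        rw [Real.exp_le_one_iff]
        have := mul_nonneg ht (by linarith [hl.2] : (0:ℝ) ≤ 1 - l)
        linarith
      linarith [(Real.exp_pos (-t * ε)).le]
    · rw [Set.indicator_of_notMem hmem]
      have hl1 : l ≤ 1 := hl.2
      have hlt : l < 1 - ε := by
        by_contra hcon
        exact hmem ⟨by linarith, hl1⟩
      have h2 : -t * (1 - l) ≤ -t * ε := by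
        have := mul_le_mul_of_nonneg_left (by linarith : ε ≤ 1 - l) ht
        nlinarith
      have := Real.exp_le_exp.mpr h2
      linarith
  calc (∫ l, Real.exp (-t * (1 - l)) ∂μ)
      ≤ ∫ l, ((Set.Icc (1 - ε) 1).indicator (fun _ => (1:ℝ)) l + Real.exp (-t * ε)) ∂μ :=
        integral_mono_ae hfi hgi hle
    _ = (μ (Set.Icc (1 - ε) 1)).toReal + Real.exp (-t * ε) := by
        rw [integral_add ((integrable_const (1:ℝ)).indicator measurableSet_Icc)
          (integrable_const _), integral_indicator_const (1:ℝ) measurableSet_Icc,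
          integral_const]
        simp
        rfl

set_option maxHeartbeats 1600000 in
private lemma aux_key
    (μ : Measure ℝ) [IsProbabilityMeasure μ] (hsupp : μ (Set.Icc (-1 : ℝ) 1)ᶜ = 0)
    (d : ℝ) (hd : 0 < d) (α : ℝ) (hα0 : 0 ≤ α) (hα1 : α ≤ 1)
    (C c : ℝ) (hC : 0 < C) (hc : 0 < c)
    (hk : ∀ t : ℝ, 2 ≤ t →
      C * Real.exp (-c * t ^ (d / (d + 2)) * Real.log t ^ α)
        ≤ (∫ l, Real.exp (-t * (1 - l)) ∂μ))
    (ε₀ : ℝ) (hε₀0 : 0 < ε₀) (hε₀1 : ε₀ ≤ 1) (hμε₀ : μ (Set.Icc (1 - ε₀) 1) < 1) :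
    ∀ η : ℝ, 0 < η → ∀ᶠ ε in nhdsWithin (0:ℝ) (Set.Ioi 0),
      0 < ε ∧ ε ≤ ε₀ ∧ 0 < μ (Set.Icc (1 - ε) 1) ∧
      0 < -Real.log ((μ (Set.Icc (1 - ε) 1)).toReal) ∧ Real.log ε < 0 ∧
      -Real.log ((μ (Set.Icc (1 - ε) 1)).toReal) ≤ ε ^ (-(d / 2 + η)) := by
  have h2d : (0:ℝ) < d + 2 := by linarith
  obtain ⟨θ, hθdef⟩ : ∃ θ : ℝ, θ = d / (d + 2) := ⟨_, rfl⟩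
  rw [← hθdef] at hk
  have hθ0 : 0 < θ := hθdef ▸ div_pos hd h2d
  have hθ1 : θ < 1 := hθdef ▸ (div_lt_one h2d).mpr (by linarith)
  obtain ⟨K, hKdef⟩ : ∃ K : ℝ, K = Real.log (2 / C) := ⟨_, rfl⟩
  -- the master eventual estimate
  intro η hη
  obtain ⟨β, hβdef⟩ : ∃ β : ℝ, β = (d + 2) / 2 + η / 2 := ⟨_, rfl⟩
  have hβ : 0 < β := by rw [hβdef]; positivity
  obtain ⟨δ', hδdef⟩ : ∃ δ' : ℝ, δ' = η / (d + 2) := ⟨_, rfl⟩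
  have hδ'pos : 0 < δ' := by rw [hδdef]; positivity
  obtain ⟨m, hmdef⟩ : ∃ m : ℝ, m = min δ' (η - η / 2 * θ) := ⟨_, rfl⟩
  have hm2 : 0 < η - η / 2 * θ := by
    have := mul_lt_mul_of_pos_left hθ1 (by positivity : (0:ℝ) < η / 2)
    linarith
  have hm : 0 < m := hmdef ▸ lt_min hδ'pos hm2
  have hβθ : β * θ = d / 2 + η / 2 * θ := by
    rw [hθdef, hβdef]; field_simp
  -- eventual bound at infinity
  have hAt : ∀ᶠ y in Filter.atTop, c * (1 + β * Real.log y) + |K| ≤ y ^ m := by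
    have h1 := (isLittleO_log_rpow_atTop hm).bound
      (show (0:ℝ) < 1 / (2 * (c * β + 1)) by positivity)
    have h2 := (tendsto_rpow_atTop hm).eventually_ge_atTop (2 * (c + |K|))
    have h3 : ∀ᶠ y : ℝ in Filter.atTop, (1:ℝ) ≤ y := Filter.eventually_ge_atTop 1
    filter_upwards [h1, h2, h3] with y hy1 hy2 hy3
    have hym : (0:ℝ) ≤ y ^ m := Real.rpow_nonneg (by linarith) m
    rw [Real.norm_eq_abs, Real.norm_eq_abs, abs_of_nonneg (Real.log_nonneg hy3),
      abs_of_nonneg hym] at hy1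
    have hQ : (0:ℝ) < c * β + 1 := by positivity
    have h4 : c * β * Real.log y ≤ (c * β + 1) * Real.log y := by
      have := Real.log_nonneg hy3
      linarith
    have h5 : (c * β + 1) * Real.log y ≤ (c * β + 1) * (1 / (2 * (c * β + 1)) * y ^ m) :=
      mul_le_mul_of_nonneg_left hy1 hQ.le
    have h6 : (c * β + 1) * (1 / (2 * (c * β + 1)) * y ^ m) = y ^ m / 2 := by
      field_simp
    linarith
  have hE0 : ∀ᶠ ε in nhdsWithin (0:ℝ) (Set.Ioi 0),
      c * (1 + β * Real.log ε⁻¹) + |K| ≤ (ε⁻¹) ^ m :=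
    tendsto_inv_nhdsGT_zero.eventually hAt
  have hr0 : (0:ℝ) < min ε₀ (min (1/2) ((2:ℝ) ^ (-(1/β)))) :=
    lt_min hε₀0 (lt_min (by norm_num) (Real.rpow_pos_of_pos two_pos _))
  have hIoo : ∀ᶠ ε in nhdsWithin (0:ℝ) (Set.Ioi 0),
      ε ∈ Set.Ioo 0 (min ε₀ (min (1/2) ((2:ℝ) ^ (-(1/β))))) :=
    Filter.eventually_of_mem (Ioo_mem_nhdsGT_of_mem ⟨le_refl 0, hr0⟩) (fun _ h => h)
  filter_upwards [hE0, hIoo] with ε hE hIo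
  have hε : 0 < ε := hIo.1
  have hεε₀ : ε ≤ ε₀ := le_of_lt (lt_of_lt_of_le hIo.2 (min_le_left _ _))
  have hεhalf : ε ≤ 1/2 :=
    le_of_lt (lt_of_lt_of_le hIo.2 (le_trans (min_le_right _ _) (min_le_left _ _)))
  have hε2β : ε ≤ (2:ℝ) ^ (-(1/β)) :=
    le_of_lt (lt_of_lt_of_le hIo.2 (le_trans (min_le_right _ _) (min_le_right _ _)))
  have hε1 : ε ≤ 1 := by linarith
  have hlogε : Real.log ε < 0 := Real.log_neg hε (by linarith)
  -- rewrite hE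
  rw [Real.log_inv, Real.inv_rpow hε.le, ← Real.rpow_neg hε.le] at hE
  obtain ⟨x, hxdef⟩ : ∃ x : ℝ, x = -Real.log ε := ⟨_, rfl⟩
  rw [← hxdef] at hE
  have hx0 : 0 < x := by rw [hxdef]; linarith
  obtain ⟨t, htdef⟩ : ∃ t : ℝ, t = ε ^ (-β) := ⟨_, rfl⟩
  have htpos : 0 < t := htdef ▸ Real.rpow_pos_of_pos hε _
  have ht2 : 2 ≤ t := by
    have h1 : ((2:ℝ) ^ (-(1/β))) ^ (-β) ≤ ε ^ (-β) :=
      Real.rpow_le_rpow_of_nonpos hε hε2β (by linarith)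
    have h2 : ((2:ℝ) ^ (-(1/β))) ^ (-β) = 2 := by
      rw [← Real.rpow_mul (by norm_num : (0:ℝ) ≤ 2)]
      rw [show -(1/β) * -β = 1 by field_simp]
      exact Real.rpow_one 2
    rw [htdef]; linarith
  have htθ : t ^ θ = ε ^ (-(β * θ)) := by
    rw [htdef, show -(β * θ) = (-β) * θ by ring, Real.rpow_mul hε.le]
  have htlog : Real.log t = β * x := by
    rw [htdef, Real.log_rpow hε, hxdef]; ring
  have hεβθ1 : 1 ≤ ε ^ (-(β * θ)) :=
    Real.one_le_rpow_of_pos_of_le_one_of_nonpos hε hε1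
      (neg_nonpos.mpr (mul_nonneg hβ.le hθ0.le))
  -- main quantity A
  obtain ⟨A, hAdef⟩ : ∃ A : ℝ, A = c * t ^ θ * Real.log t ^ α := ⟨_, rfl⟩
  have hA_eq : A = c * ε ^ (-(β * θ)) * (β * x) ^ α := by rw [hAdef, htθ, htlog]
  have hbx : (0:ℝ) ≤ β * x := by positivity
  have hpow_le : (β * x) ^ α ≤ 1 + β * x := by
    rcases le_or_gt (β * x) 1 with h | h
    · have := Real.rpow_le_one hbx h hα0
      linarith
    · have h1 : (β * x) ^ α ≤ (β * x) ^ (1:ℝ) :=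
        Real.rpow_le_rpow_of_exponent_le h.le hα1
      rw [Real.rpow_one] at h1
      linarith
  have hA_le : A ≤ ε ^ (-(β * θ)) * (c * (1 + β * x)) := by
    rw [hA_eq]
    have := mul_le_mul_of_nonneg_left hpow_le
      (by positivity : (0:ℝ) ≤ c * ε ^ (-(β * θ)))
    linarith
  -- t * ε
  have l1 : ε ^ (-β + 1) = t * ε := by
    rw [htdef, Real.rpow_add hε, Real.rpow_one]
  have l3 : -β + 1 = -(β * θ) + -δ' := by
    rw [hθdef, hβdef, hδdef]; field_simp; ring
  have htmul : t * ε = ε ^ (-(β * θ)) * ε ^ (-δ') := by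
    rw [← l1, l3, Real.rpow_add hε]
  have hmδ : ε ^ (-m) ≤ ε ^ (-δ') :=
    Real.rpow_le_rpow_of_exponent_ge hε hε1 (neg_le_neg (hmdef ▸ min_le_left _ _))
  have e1 : |K| ≤ ε ^ (-δ') - c * (1 + β * x) := by linarith
  have e2 : 1 * |K| ≤ ε ^ (-(β * θ)) * (ε ^ (-δ') - c * (1 + β * x)) :=
    mul_le_mul hεβθ1 e1 (abs_nonneg K) (le_trans zero_le_one hεβθ1)
  rw [one_mul, mul_sub] at e2
  have key1 : K ≤ t * ε - A := by
    have := le_abs_self K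
    rw [htmul]
    linarith
  -- exp bound
  have hexpK : Real.exp (-K) = C / 2 := by
    rw [hKdef, Real.exp_neg, Real.exp_log (by positivity : (0:ℝ) < 2 / C), inv_div]
  have hexp_le : Real.exp (-(t * ε)) ≤ Real.exp (-A) * (C / 2) := by
    rw [← hexpK, ← Real.exp_add]
    exact Real.exp_le_exp.mpr (by linarith)
  -- heat kernel bound
  have hk' := hk t ht2
  rw [show -c * t ^ θ * Real.log t ^ α = -A by rw [hAdef]; ring] at hk'
  have hint := aux_int_bound μ hsupp t ε (by linarith)
  have hμr : C / 2 * Real.exp (-A) ≤ (μ (Set.Icc (1 - ε) 1)).toReal := by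
    have h1 : Real.exp (-t * ε) ≤ Real.exp (-A) * (C / 2) := by
      rw [show -t * ε = -(t * ε) by ring]; exact hexp_le
    have h2 : C * Real.exp (-A) ≤ (μ (Set.Icc (1 - ε) 1)).toReal
        + Real.exp (-A) * (C / 2) := by linarith
    linarith
  have hμr_pos : 0 < (μ (Set.Icc (1 - ε) 1)).toReal :=
    lt_of_lt_of_le (by positivity) hμr
  have hμ_pos : 0 < μ (Set.Icc (1 - ε) 1) := by
    by_contra h
    push_neg at h
    rw [le_zero_iff.mp h] at hμr_pos
    simp at hμr_pos
  have hμr_lt1 : (μ (Set.Icc (1 - ε) 1)).toReal < 1 := by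
    have hsub : μ (Set.Icc (1 - ε) 1) ≤ μ (Set.Icc (1 - ε₀) 1) :=
      measure_mono (Set.Icc_subset_Icc (by linarith) le_rfl)
    have h1 : (μ (Set.Icc (1 - ε) 1)).toReal ≤ (μ (Set.Icc (1 - ε₀) 1)).toReal :=
      ENNReal.toReal_mono (measure_ne_top μ _) hsub
    have h2 : (μ (Set.Icc (1 - ε₀) 1)).toReal < 1 := by
      rw [show (1:ℝ) = (1:ENNReal).toReal by simp]
      exact ENNReal.toReal_lt_toReal (measure_ne_top μ _) (by simp) |>.mpr hμε₀
    linarith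
  have hneglog : 0 < -Real.log ((μ (Set.Icc (1 - ε) 1)).toReal) := by
    have := Real.log_neg hμr_pos hμr_lt1
    linarith
  refine ⟨hε, hεε₀, hμ_pos, hneglog, hlogε, ?_⟩
  -- final bound on -log
  have hlog1 : Real.log (C / 2 * Real.exp (-A)) ≤
      Real.log ((μ (Set.Icc (1 - ε) 1)).toReal) :=
    Real.log_le_log (by positivity) hμr
  rw [Real.log_mul (by positivity) (Real.exp_ne_zero _), Real.log_exp] at hlog1
  have hKC : Real.log (C / 2) = -K := by
    rw [hKdef, ← Real.log_inv, inv_div]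
  have hfin1 : -Real.log ((μ (Set.Icc (1 - ε) 1)).toReal) ≤ A + K := by
    rw [hKC] at hlog1; linarith
  -- A + K ≤ ε ^ (-(d/2 + η))
  have s1 : A + K ≤ ε ^ (-(β * θ)) * (c * (1 + β * x) + |K|) := by
    rw [mul_add]
    have h1 : K ≤ ε ^ (-(β * θ)) * |K| :=
      le_trans (le_abs_self K) (le_mul_of_one_le_left (abs_nonneg _) hεβθ1)
    linarith
  have s2 : ε ^ (-(β * θ)) * (c * (1 + β * x) + |K|) ≤ ε ^ (-(β * θ)) * ε ^ (-m) :=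
    mul_le_mul_of_nonneg_left hE (by positivity)
  have s3 : ε ^ (-(β * θ)) * ε ^ (-m) = ε ^ (-(β * θ) + -m) :=
    (Real.rpow_add hε _ _).symm
  have s4 : ε ^ (-(β * θ) + -m) ≤ ε ^ (-(d / 2 + η)) := by
    apply Real.rpow_le_rpow_of_exponent_ge hε hε1
    have hmle : m ≤ η - η / 2 * θ := hmdef ▸ min_le_right _ _
    linarith [hβθ]
  linarith

set_option maxHeartbeats 1600000 in
/-- lower Lifshitz-tail bound from a lower heat-kernel bound. -/
theorem statement_11
    (μ : Measure ℝ) [IsProbabilityMeasure μ] (hsupp : μ (Set.Icc (-1 : ℝ) 1)ᶜ = 0)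
    (d : ℝ) (hd : 0 < d) (α : ℝ) (hα0 : 0 ≤ α) (hα1 : α ≤ 1)
    (C c : ℝ) (hC : 0 < C) (hc : 0 < c)
    (hk : ∀ t : ℝ, 2 ≤ t →
      C * Real.exp (-c * t ^ (d / (d + 2)) * Real.log t ^ α)
        ≤ (∫ l, Real.exp (-t * (1 - l)) ∂μ))
    (ε₀ : ℝ) (hε₀0 : 0 < ε₀) (hε₀1 : ε₀ ≤ 1) (hμε₀ : μ (Set.Icc (1 - ε₀) 1) < 1) :
    (∃ ε₁ : ℝ, 0 < ε₁ ∧ ∀ ε : ℝ, 0 < ε → ε ≤ ε₁ → 0 < μ (Set.Icc (1 - ε) 1)) ∧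
    -(d / 2) ≤ Filter.liminf
        (fun ε : ℝ => Real.log (-Real.log ((μ (Set.Icc (1 - ε) 1)).toReal)) / Real.log ε)
        (nhdsWithin 0 (Set.Ioi 0)) := by
  have key := aux_key μ hsupp d hd α hα0 hα1 C c hC hc hk ε₀ hε₀0 hε₀1 hμε₀
  -- Assemble the two conclusions
  have h1 := key 1 one_pos
  obtain ⟨b, hb, hPb⟩ := (nhdsGT_basis (0:ℝ)).eventually_iff.mp h1
  constructor
  · refine ⟨b / 2, by linarith, fun ε hε0 hεb => ?_⟩
    exact (hPb ⟨hε0, by linarith⟩).2.2.1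
  · obtain ⟨ε', hP'⟩ := h1.exists
    obtain ⟨hε'0, hε'ε₀, hμ'pos, -, -, -⟩ := hP'
    have hμ₀pos : 0 < μ (Set.Icc (1 - ε₀) 1) :=
      lt_of_lt_of_le hμ'pos (measure_mono (Set.Icc_subset_Icc (by linarith) le_rfl))
    have hμ₀r_pos : 0 < (μ (Set.Icc (1 - ε₀) 1)).toReal :=
      ENNReal.toReal_pos hμ₀pos.ne' (measure_ne_top μ _)
    have hμ₀r_lt1 : (μ (Set.Icc (1 - ε₀) 1)).toReal < 1 := by
      rw [show (1:ℝ) = (1:ENNReal).toReal by simp]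
      exact (ENNReal.toReal_lt_toReal (measure_ne_top μ _) (by simp)).mpr hμε₀
    obtain ⟨L0, hL0⟩ : ∃ L0 : ℝ, L0 = -Real.log ((μ (Set.Icc (1 - ε₀) 1)).toReal) :=
      ⟨_, rfl⟩
    have hL0pos : 0 < L0 := by
      have := Real.log_neg hμ₀r_pos hμ₀r_lt1
      rw [hL0]; linarith
    apply le_of_forall_pos_le_add
    intro η hη
    rw [← sub_le_iff_le_add]
    apply Filter.le_liminf_of_le
    · -- coboundedness: the function is eventually bounded above
      apply Filter.isCoboundedUnder_ge_of_eventually_le _ (x := |Real.log L0|)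
      have hev2 : ∀ᶠ ε in nhdsWithin (0:ℝ) (Set.Ioi 0), ε ∈ Set.Ioo 0 (Real.exp (-1)) :=
        Filter.eventually_of_mem (Ioo_mem_nhdsGT_of_mem ⟨le_refl 0, Real.exp_pos _⟩)
          (fun _ h => h)
      filter_upwards [key 1 one_pos, hev2] with ε hP hIo
      obtain ⟨h0ε, hεε₀, hμpos, hneglog, hlogneg, -⟩ := hP
      have hD : Real.log ε < -1 := by
        have := Real.log_lt_log h0ε hIo.2
        rwa [Real.log_exp] at this
      have hμr_pos : 0 < (μ (Set.Icc (1 - ε) 1)).toReal :=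
        ENNReal.toReal_pos hμpos.ne' (measure_ne_top μ _)
      have hmono : (μ (Set.Icc (1 - ε) 1)).toReal ≤ (μ (Set.Icc (1 - ε₀) 1)).toReal :=
        ENNReal.toReal_mono (measure_ne_top μ _)
          (measure_mono (Set.Icc_subset_Icc (by linarith) le_rfl))
      have hNL : L0 ≤ -Real.log ((μ (Set.Icc (1 - ε) 1)).toReal) := by
        have := Real.log_le_log hμr_pos hmono
        rw [hL0]; linarith
      have hN : Real.log L0 ≤ Real.log (-Real.log ((μ (Set.Icc (1 - ε) 1)).toReal)) :=
        Real.log_le_log hL0pos hNL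
      have hq1 : Real.log (-Real.log ((μ (Set.Icc (1 - ε) 1)).toReal)) / Real.log ε
          ≤ Real.log L0 / Real.log ε :=
        div_le_div_of_nonpos_of_le (by linarith) hN
      have hq2 : Real.log L0 / Real.log ε ≤ |Real.log L0| := by
        rcases le_or_gt 0 (Real.log L0) with h | h
        · exact le_trans (div_nonpos_iff.mpr (Or.inl ⟨h, by linarith⟩)) (abs_nonneg _)
        · have h1 : Real.log L0 / Real.log ε = (-Real.log L0) / (-Real.log ε) := by
            rw [neg_div_neg_eq]
          rw [h1, abs_of_neg h]
          exact div_le_self (by linarith) (by linarith)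
      linarith
    · filter_upwards [key η hη] with ε hP
      obtain ⟨h0ε, -, -, hneglog, hlogneg, hbound⟩ := hP
      rw [le_div_iff_of_neg hlogneg]
      have h1 : Real.log (-Real.log ((μ (Set.Icc (1 - ε) 1)).toReal))
          ≤ Real.log (ε ^ (-(d / 2 + η))) := Real.log_le_log hneglog hbound
      rw [Real.log_rpow h0ε] at h1
      calc Real.log (-Real.log ((μ (Set.Icc (1 - ε) 1)).toReal))
          ≤ -(d / 2 + η) * Real.log ε := h1
        _ = (-(d / 2) - η) * Real.log ε := by ring
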